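/- arXiv:1208.3538 — 3 statements merged into one kernel-verified Lean document; each statement's English description precedes it below -/
import Mathlib

section
/- Let A be an n×n column stochastic matrix and M = A - I. Define the vector v by v_k = det(M_{k,k}), where M_{k,k} is the (n-1)×(n-1) matrix obtained from M by deleting its k-th row and k-th column. Then A v = v, i.e., M v = 0. -/
open Matrix

/-- A square matrix all of whose rows sum to zero has determinant zero. -/
lemma det_eq_zero_of_row_sums_zero {m : ℕ} (P : Matrix (Fin (m + 1)) (Fin (m + 1)) ℝ)
    (h : ∀ i, ∑ j, P i j = 0) : P.det = 0 := by
  by_contra hd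
  have hinj := (Matrix.mulVec_injective_iff_isUnit (A := P)).mpr ((Matrix.isUnit_iff_isUnit_det P).mpr (Ne.isUnit hd))
  have h1 : P *ᵥ (fun _ => (1 : ℝ)) = P *ᵥ 0 := by
    funext i
    simp [Matrix.mulVec, dotProduct, h i]
  have := congrFun (hinj h1) 0
  norm_num at this

theorem stmt_2 (n : ℕ) (A : Matrix (Fin (n + 1)) (Fin (n + 1)) ℝ)
    (hnonneg : ∀ i j, 0 ≤ A i j) (hcol : ∀ j, ∑ i, A i j = 1) :
    let M : Matrix (Fin (n + 1)) (Fin (n + 1)) ℝ := A - 1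
    let v : Fin (n + 1) → ℝ := fun k => (M.submatrix k.succAbove k.succAbove).det
    A.mulVec v = v ∧ M.mulVec v = 0 := by
  intro M v
  -- columns of M sum to zero
  have hMsum : ∀ j, ∑ i, M i j = 0 := by
    intro j
    have : ∑ i, (1 : Matrix (Fin (n + 1)) (Fin (n + 1)) ℝ) i j = 1 := by
      simp [Matrix.one_apply]
    simp only [M, Matrix.sub_apply, Finset.sum_sub_distrib, hcol j, this, sub_self]
  -- v k is the k-th diagonal entry of the adjugate
  have hv : ∀ k, v k = M.adjugate k k := by
    intro k
    rw [Matrix.adjugate_fin_succ_eq_det_submatrix]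
    simp [v]
  -- the adjugate of M has constant rows
  have hadj : ∀ k j, M.adjugate k j = M.adjugate k k := by
    intro k j
    have key : (Mᵀ.updateRow k (Pi.single j 1 - Pi.single k 1 + Pi.single k 1)).det
        = (Mᵀ.updateRow k (Pi.single j 1 - Pi.single k 1)).det
          + (Mᵀ.updateRow k (Pi.single k 1)).det :=
      Matrix.det_updateRow_add _ _ _ _
    have hz : (Mᵀ.updateRow k (Pi.single j 1 - Pi.single k 1)).det = 0 := by
      apply det_eq_zero_of_row_sums_zero
      intro i
      by_cases hik : i = k
      · subst hik
        simp [Matrix.updateRow_self, Pi.sub_apply, Finset.sum_sub_distrib]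
      · rw [show ∑ l, (Mᵀ.updateRow k _) i l = ∑ l, Mᵀ i l from
          Finset.sum_congr rfl fun l _ => by rw [Matrix.updateRow_ne hik]]
        simpa [Matrix.transpose_apply] using hMsum i
    have h1 : M.adjugate k j = (Mᵀ.updateRow k (Pi.single j 1)).det := by
      have : M.adjugate k j = Mᵀ.adjugate j k := by
        rw [← Matrix.adjugate_transpose]; rfl
      rw [this, Matrix.adjugate_apply]
    have h2 : M.adjugate k k = (Mᵀ.updateRow k (Pi.single k 1)).det := by
      have : M.adjugate k k = Mᵀ.adjugate k k := by
        rw [← Matrix.adjugate_transpose]; rfl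
      rw [this, Matrix.adjugate_apply]
    rw [h1, h2]
    have : (Pi.single j 1 : Fin (n+1) → ℝ) - Pi.single k 1 + Pi.single k 1
        = Pi.single j 1 := by abel
    rw [this] at key
    rw [key, hz, zero_add]
  -- M *ᵥ v = 0 : row i is the cofactor expansion of det M, which is 0
  have hdet : M.det = 0 := by
    rw [← Matrix.det_transpose]
    exact det_eq_zero_of_row_sums_zero Mᵀ (fun i => by simpa using hMsum i)
  have hMv : M.mulVec v = 0 := by
    funext i
    have expand := Matrix.det_eq_sum_mul_adjugate_row M i
    calc (M.mulVec v) i = ∑ k, M i k * M.adjugate k k := by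
          simp [Matrix.mulVec, dotProduct, hv]
      _ = ∑ k, M i k * M.adjugate k i := by
          exact Finset.sum_congr rfl fun k _ => by rw [hadj k i]
      _ = M.det := expand.symm
      _ = 0 := hdet
  refine ⟨?_, hMv⟩
  have : A.mulVec v = M.mulVec v + v := by
    funext i
    simp [M, Matrix.sub_mulVec, Matrix.one_mulVec]
  rw [this, hMv, zero_add]
end

section
/- For n = 2, 3, 4, the number of monomials (counted with multiplicity after cancellation, each having coefficient ±1) in each coordinate of the cofactor eigenvector v_k = det(M_{k,k}) of the n-state Markov matrix, viewed as a polynomial in the variables τ_{ij}, equals n^{n−2}. In particular, for n = 3 each coordinate is a sum of exactly 3 monomials in the six variables τ_{ij}. -/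
open MvPolynomial

/-- The `n × n` Markov transition matrix with symbolic entries: the off-diagonal
`(r, c)` entry (row `r`, column `c`) is the variable `τ_{c r}` (probability of switching
from state `c` to state `r`), and the `c`-th diagonal entry is `1 - ∑_{l ≠ c} τ_{c l}`. -/
noncomputable def markovA (n : ℕ) :
    Matrix (Fin n) (Fin n) (MvPolynomial (Fin n × Fin n) ℚ) := fun r c =>
  if r = c then 1 - ∑ l ∈ Finset.univ.erase c, X (c, l) else X (c, r)

/-- The `k`-th coordinate of the cofactor eigenvector: the determinant of `M = A - I`
with its `k`-th row and `k`-th column deleted. -/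
noncomputable def cofVec (m : ℕ) (k : Fin (m + 1)) :
    MvPolynomial (Fin (m + 1) × Fin (m + 1)) ℚ :=
  ((markovA (m + 1) - 1).submatrix k.succAbove k.succAbove).det

noncomputable def ff {σ : Type*} [DecidableEq σ] (t : Finset σ) : σ →₀ ℕ := ∑ e ∈ t, Finsupp.single e 1

lemma ff_apply {σ : Type*} [DecidableEq σ] (t : Finset σ) (x : σ) :
    ff t x = if x ∈ t then 1 else 0 := by
  classical
  simp only [ff, Finsupp.finset_sum_apply, Finsupp.single_apply]
  simp [Finset.sum_ite_eq' t x (fun _ => 1)]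

lemma ff_inj {σ : Type*} [DecidableEq σ] : Function.Injective (ff (σ := σ)) := by
  intro s t h
  ext x
  have := congrArg (fun f => f x) h
  simp only [ff_apply] at this
  by_cases hs : x ∈ s <;> by_cases ht : x ∈ t <;> simp [hs, ht] at this ⊢

lemma monomial_ff {σ : Type*} [DecidableEq σ] (t : Finset σ) (c : ℚ) :
    (monomial (ff t) c : MvPolynomial σ ℚ) = C c * ∏ e ∈ t, X e := by
  classical
  induction t using Finset.cons_induction with
  | empty => simp [ff]
  | cons a s ha ih =>
      rw [Finset.prod_cons, show ff (Finset.cons a s ha) = Finsupp.single a 1 + ff s by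
        rw [ff, ff, Finset.sum_cons]]
      rw [monomial_single_add]
      rw [ih]; ring

lemma key {σ : Type*} [DecidableEq σ] {N : ℕ} (g : Fin N → Finset σ)
    (hg : Function.Injective g) (c : ℚ) (hc : c = 1 ∨ c = -1)
    (P : MvPolynomial σ ℚ) (hP : P = ∑ i, monomial (ff (g i)) c) :
    P.support.card = N ∧ ∀ d ∈ P.support, P.coeff d = 1 ∨ P.coeff d = -1 := by
  have hc0 : c ≠ 0 := by rcases hc with h | h <;> simp [h]
  have hcoeff : ∀ d, P.coeff d = ∑ i, if ff (g i) = d then c else 0 := by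
    intro d; rw [hP, coeff_sum]; simp [coeff_monomial]
  have hval : ∀ i, P.coeff (ff (g i)) = c := by
    intro i
    rw [hcoeff, Finset.sum_eq_single i]
    · simp
    · intro b _ hb
      rw [if_neg]
      exact fun he => hb (hg (ff_inj he))
    · simp
  have hsup : P.support = Finset.image (fun i => ff (g i)) Finset.univ := by
    ext d
    simp only [mem_support_iff, Finset.mem_image, Finset.mem_univ, true_and]
    constructor
    · intro h
      by_contra hno
      push_neg at hno
      apply h
      rw [hcoeff]
      exact Finset.sum_eq_zero fun i _ => if_neg (hno i)
    · rintro ⟨i, rfl⟩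
      rw [hval]; exact hc0
  constructor
  · rw [hsup, Finset.card_image_of_injOn (fun a _ b _ h => hg (ff_inj h)), Finset.card_univ,
      Fintype.card_fin]
  · intro d hd
    rw [hsup] at hd
    simp only [Finset.mem_image, Finset.mem_univ, true_and] at hd
    obtain ⟨i, rfl⟩ := hd
    rw [hval]; exact hc

noncomputable def g10 : Fin 1 → Finset (Fin 2 × Fin 2) :=
![{(1,0)}]

set_option maxHeartbeats 2000000 in
lemma h10 : cofVec 1 0 = ∑ i : Fin 1, monomial (ff (g10 i)) (-1 : ℚ) := by
  have s0 : Fin.succAbove (0 : Fin 2) (0 : Fin 1) = 1 := rfl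
  have e1 : ∑ l ∈ Finset.univ.erase (1:Fin 2), (X ((1,l)) : MvPolynomial (Fin 2 × Fin 2) ℚ)
      = X (1,0) := by
    rw [show Finset.univ.erase (1:Fin 2) = {0} from by decide,
      Finset.sum_singleton]
  simp only [cofVec, Matrix.det_fin_one, Matrix.submatrix_apply, s0, markovA,
    Matrix.sub_apply, Matrix.one_apply, e1, g10, monomial_ff, Fin.sum_univ_succ,
    Fin.sum_univ_zero, Matrix.cons_val_zero, Matrix.cons_val_succ]
  simp (config := { decide := true }) only [Finset.prod_insert, Finset.prod_singleton,
    Finset.mem_insert, Finset.mem_singleton, Prod.mk.injEq, if_true, if_false, not_false_iff,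
    map_neg, map_one]
  ring

noncomputable def g11 : Fin 1 → Finset (Fin 2 × Fin 2) :=
![{(0,1)}]

set_option maxHeartbeats 2000000 in
lemma h11 : cofVec 1 1 = ∑ i : Fin 1, monomial (ff (g11 i)) (-1 : ℚ) := by
  have s0 : Fin.succAbove (1 : Fin 2) (0 : Fin 1) = 0 := rfl
  have e0 : ∑ l ∈ Finset.univ.erase (0:Fin 2), (X ((0,l)) : MvPolynomial (Fin 2 × Fin 2) ℚ)
      = X (0,1) := by
    rw [show Finset.univ.erase (0:Fin 2) = {1} from by decide,
      Finset.sum_singleton]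
  simp only [cofVec, Matrix.det_fin_one, Matrix.submatrix_apply, s0, markovA,
    Matrix.sub_apply, Matrix.one_apply, e0, g11, monomial_ff, Fin.sum_univ_succ,
    Fin.sum_univ_zero, Matrix.cons_val_zero, Matrix.cons_val_succ]
  simp (config := { decide := true }) only [Finset.prod_insert, Finset.prod_singleton,
    Finset.mem_insert, Finset.mem_singleton, Prod.mk.injEq, if_true, if_false, not_false_iff,
    map_neg, map_one]
  ring

noncomputable def g20 : Fin 3 → Finset (Fin 3 × Fin 3) :=
![{(1,0), (2,0)},
  {(1,0), (2,1)},
  {(1,2), (2,0)}]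

set_option maxHeartbeats 2000000 in
lemma h20 : cofVec 2 0 = ∑ i : Fin 3, monomial (ff (g20 i)) (1 : ℚ) := by
  have s0 : Fin.succAbove (0 : Fin 3) (0 : Fin 2) = 1 := rfl
  have s1 : Fin.succAbove (0 : Fin 3) (1 : Fin 2) = 2 := rfl
  have e1 : ∑ l ∈ Finset.univ.erase (1:Fin 3), (X ((1,l)) : MvPolynomial (Fin 3 × Fin 3) ℚ)
      = X (1,0) + X (1,2) := by
    rw [show Finset.univ.erase (1:Fin 3) = {0,2} from by decide,
      Finset.sum_insert (by decide), Finset.sum_singleton]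
  have e2 : ∑ l ∈ Finset.univ.erase (2:Fin 3), (X ((2,l)) : MvPolynomial (Fin 3 × Fin 3) ℚ)
      = X (2,0) + X (2,1) := by
    rw [show Finset.univ.erase (2:Fin 3) = {0,1} from by decide,
      Finset.sum_insert (by decide), Finset.sum_singleton]
  simp only [cofVec, Matrix.det_fin_two, Matrix.submatrix_apply, s0, s1, markovA,
    Matrix.sub_apply, Matrix.one_apply, e1, e2, g20, monomial_ff, Fin.sum_univ_succ,
    Fin.sum_univ_zero, Matrix.cons_val_zero, Matrix.cons_val_succ]
  simp (config := { decide := true }) only [Finset.prod_insert, Finset.prod_singleton,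
    Finset.mem_insert, Finset.mem_singleton, Prod.mk.injEq, if_true, if_false, not_false_iff,
    map_neg, map_one]
  ring

noncomputable def g21 : Fin 3 → Finset (Fin 3 × Fin 3) :=
![{(0,1), (2,0)},
  {(0,1), (2,1)},
  {(0,2), (2,1)}]

set_option maxHeartbeats 2000000 in
lemma h21 : cofVec 2 1 = ∑ i : Fin 3, monomial (ff (g21 i)) (1 : ℚ) := by
  have s0 : Fin.succAbove (1 : Fin 3) (0 : Fin 2) = 0 := rfl
  have s1 : Fin.succAbove (1 : Fin 3) (1 : Fin 2) = 2 := rfl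
  have e0 : ∑ l ∈ Finset.univ.erase (0:Fin 3), (X ((0,l)) : MvPolynomial (Fin 3 × Fin 3) ℚ)
      = X (0,1) + X (0,2) := by
    rw [show Finset.univ.erase (0:Fin 3) = {1,2} from by decide,
      Finset.sum_insert (by decide), Finset.sum_singleton]
  have e2 : ∑ l ∈ Finset.univ.erase (2:Fin 3), (X ((2,l)) : MvPolynomial (Fin 3 × Fin 3) ℚ)
      = X (2,0) + X (2,1) := by
    rw [show Finset.univ.erase (2:Fin 3) = {0,1} from by decide,
      Finset.sum_insert (by decide), Finset.sum_singleton]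
  simp only [cofVec, Matrix.det_fin_two, Matrix.submatrix_apply, s0, s1, markovA,
    Matrix.sub_apply, Matrix.one_apply, e0, e2, g21, monomial_ff, Fin.sum_univ_succ,
    Fin.sum_univ_zero, Matrix.cons_val_zero, Matrix.cons_val_succ]
  simp (config := { decide := true }) only [Finset.prod_insert, Finset.prod_singleton,
    Finset.mem_insert, Finset.mem_singleton, Prod.mk.injEq, if_true, if_false, not_false_iff,
    map_neg, map_one]
  ring

noncomputable def g22 : Fin 3 → Finset (Fin 3 × Fin 3) :=
![{(0,1), (1,2)},
  {(0,2), (1,0)},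
  {(0,2), (1,2)}]

set_option maxHeartbeats 2000000 in
lemma h22 : cofVec 2 2 = ∑ i : Fin 3, monomial (ff (g22 i)) (1 : ℚ) := by
  have s0 : Fin.succAbove (2 : Fin 3) (0 : Fin 2) = 0 := rfl
  have s1 : Fin.succAbove (2 : Fin 3) (1 : Fin 2) = 1 := rfl
  have e0 : ∑ l ∈ Finset.univ.erase (0:Fin 3), (X ((0,l)) : MvPolynomial (Fin 3 × Fin 3) ℚ)
      = X (0,1) + X (0,2) := by
    rw [show Finset.univ.erase (0:Fin 3) = {1,2} from by decide,
      Finset.sum_insert (by decide), Finset.sum_singleton]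
  have e1 : ∑ l ∈ Finset.univ.erase (1:Fin 3), (X ((1,l)) : MvPolynomial (Fin 3 × Fin 3) ℚ)
      = X (1,0) + X (1,2) := by
    rw [show Finset.univ.erase (1:Fin 3) = {0,2} from by decide,
      Finset.sum_insert (by decide), Finset.sum_singleton]
  simp only [cofVec, Matrix.det_fin_two, Matrix.submatrix_apply, s0, s1, markovA,
    Matrix.sub_apply, Matrix.one_apply, e0, e1, g22, monomial_ff, Fin.sum_univ_succ,
    Fin.sum_univ_zero, Matrix.cons_val_zero, Matrix.cons_val_succ]
  simp (config := { decide := true }) only [Finset.prod_insert, Finset.prod_singleton,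
    Finset.mem_insert, Finset.mem_singleton, Prod.mk.injEq, if_true, if_false, not_false_iff,
    map_neg, map_one]
  ring

noncomputable def g30 : Fin 16 → Finset (Fin 4 × Fin 4) :=
![{(1,0), (2,0), (3,0)},
  {(1,0), (2,0), (3,1)},
  {(1,0), (2,0), (3,2)},
  {(1,0), (2,1), (3,0)},
  {(1,0), (2,1), (3,1)},
  {(1,0), (2,1), (3,2)},
  {(1,0), (2,3), (3,0)},
  {(1,0), (2,3), (3,1)},
  {(1,2), (2,0), (3,0)},
  {(1,2), (2,0), (3,1)},
  {(1,2), (2,0), (3,2)},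
  {(1,2), (2,3), (3,0)},
  {(1,3), (2,0), (3,0)},
  {(1,3), (2,0), (3,2)},
  {(1,3), (2,1), (3,0)},
  {(1,3), (2,3), (3,0)}]

set_option maxHeartbeats 2000000 in
lemma h30 : cofVec 3 0 = ∑ i : Fin 16, monomial (ff (g30 i)) (-1 : ℚ) := by
  have s0 : Fin.succAbove (0 : Fin 4) (0 : Fin 3) = 1 := rfl
  have s1 : Fin.succAbove (0 : Fin 4) (1 : Fin 3) = 2 := rfl
  have s2 : Fin.succAbove (0 : Fin 4) (2 : Fin 3) = 3 := rfl
  have e1 : ∑ l ∈ Finset.univ.erase (1:Fin 4), (X ((1,l)) : MvPolynomial (Fin 4 × Fin 4) ℚ)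
      = X (1,0) + (X (1,2) + X (1,3)) := by
    rw [show Finset.univ.erase (1:Fin 4) = {0,2,3} from by decide,
      Finset.sum_insert (by decide), Finset.sum_insert (by decide), Finset.sum_singleton]
  have e2 : ∑ l ∈ Finset.univ.erase (2:Fin 4), (X ((2,l)) : MvPolynomial (Fin 4 × Fin 4) ℚ)
      = X (2,0) + (X (2,1) + X (2,3)) := by
    rw [show Finset.univ.erase (2:Fin 4) = {0,1,3} from by decide,
      Finset.sum_insert (by decide), Finset.sum_insert (by decide), Finset.sum_singleton]
  have e3 : ∑ l ∈ Finset.univ.erase (3:Fin 4), (X ((3,l)) : MvPolynomial (Fin 4 × Fin 4) ℚ)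
      = X (3,0) + (X (3,1) + X (3,2)) := by
    rw [show Finset.univ.erase (3:Fin 4) = {0,1,2} from by decide,
      Finset.sum_insert (by decide), Finset.sum_insert (by decide), Finset.sum_singleton]
  simp only [cofVec, Matrix.det_fin_three, Matrix.submatrix_apply, s0, s1, s2, markovA,
    Matrix.sub_apply, Matrix.one_apply, e1, e2, e3, g30, monomial_ff, Fin.sum_univ_succ,
    Fin.sum_univ_zero, Matrix.cons_val_zero, Matrix.cons_val_succ]
  simp (config := { decide := true }) only [Finset.prod_insert, Finset.prod_singleton,
    Finset.mem_insert, Finset.mem_singleton, Prod.mk.injEq, if_true, if_false, not_false_iff,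
    map_neg, map_one]
  ring

noncomputable def g31 : Fin 16 → Finset (Fin 4 × Fin 4) :=
![{(0,1), (2,0), (3,0)},
  {(0,1), (2,0), (3,1)},
  {(0,1), (2,0), (3,2)},
  {(0,1), (2,1), (3,0)},
  {(0,1), (2,1), (3,1)},
  {(0,1), (2,1), (3,2)},
  {(0,1), (2,3), (3,0)},
  {(0,1), (2,3), (3,1)},
  {(0,2), (2,1), (3,0)},
  {(0,2), (2,1), (3,1)},
  {(0,2), (2,1), (3,2)},
  {(0,2), (2,3), (3,1)},
  {(0,3), (2,0), (3,1)},
  {(0,3), (2,1), (3,1)},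
  {(0,3), (2,1), (3,2)},
  {(0,3), (2,3), (3,1)}]

set_option maxHeartbeats 2000000 in
lemma h31 : cofVec 3 1 = ∑ i : Fin 16, monomial (ff (g31 i)) (-1 : ℚ) := by
  have s0 : Fin.succAbove (1 : Fin 4) (0 : Fin 3) = 0 := rfl
  have s1 : Fin.succAbove (1 : Fin 4) (1 : Fin 3) = 2 := rfl
  have s2 : Fin.succAbove (1 : Fin 4) (2 : Fin 3) = 3 := rfl
  have e0 : ∑ l ∈ Finset.univ.erase (0:Fin 4), (X ((0,l)) : MvPolynomial (Fin 4 × Fin 4) ℚ)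
      = X (0,1) + (X (0,2) + X (0,3)) := by
    rw [show Finset.univ.erase (0:Fin 4) = {1,2,3} from by decide,
      Finset.sum_insert (by decide), Finset.sum_insert (by decide), Finset.sum_singleton]
  have e2 : ∑ l ∈ Finset.univ.erase (2:Fin 4), (X ((2,l)) : MvPolynomial (Fin 4 × Fin 4) ℚ)
      = X (2,0) + (X (2,1) + X (2,3)) := by
    rw [show Finset.univ.erase (2:Fin 4) = {0,1,3} from by decide,
      Finset.sum_insert (by decide), Finset.sum_insert (by decide), Finset.sum_singleton]
  have e3 : ∑ l ∈ Finset.univ.erase (3:Fin 4), (X ((3,l)) : MvPolynomial (Fin 4 × Fin 4) ℚ)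
      = X (3,0) + (X (3,1) + X (3,2)) := by
    rw [show Finset.univ.erase (3:Fin 4) = {0,1,2} from by decide,
      Finset.sum_insert (by decide), Finset.sum_insert (by decide), Finset.sum_singleton]
  simp only [cofVec, Matrix.det_fin_three, Matrix.submatrix_apply, s0, s1, s2, markovA,
    Matrix.sub_apply, Matrix.one_apply, e0, e2, e3, g31, monomial_ff, Fin.sum_univ_succ,
    Fin.sum_univ_zero, Matrix.cons_val_zero, Matrix.cons_val_succ]
  simp (config := { decide := true }) only [Finset.prod_insert, Finset.prod_singleton,
    Finset.mem_insert, Finset.mem_singleton, Prod.mk.injEq, if_true, if_false, not_false_iff,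
    map_neg, map_one]
  ring

noncomputable def g32 : Fin 16 → Finset (Fin 4 × Fin 4) :=
![{(0,1), (1,2), (3,0)},
  {(0,1), (1,2), (3,1)},
  {(0,1), (1,2), (3,2)},
  {(0,1), (1,3), (3,2)},
  {(0,2), (1,0), (3,0)},
  {(0,2), (1,0), (3,1)},
  {(0,2), (1,0), (3,2)},
  {(0,2), (1,2), (3,0)},
  {(0,2), (1,2), (3,1)},
  {(0,2), (1,2), (3,2)},
  {(0,2), (1,3), (3,0)},
  {(0,2), (1,3), (3,2)},
  {(0,3), (1,0), (3,2)},
  {(0,3), (1,2), (3,1)},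
  {(0,3), (1,2), (3,2)},
  {(0,3), (1,3), (3,2)}]

set_option maxHeartbeats 2000000 in
lemma h32 : cofVec 3 2 = ∑ i : Fin 16, monomial (ff (g32 i)) (-1 : ℚ) := by
  have s0 : Fin.succAbove (2 : Fin 4) (0 : Fin 3) = 0 := rfl
  have s1 : Fin.succAbove (2 : Fin 4) (1 : Fin 3) = 1 := rfl
  have s2 : Fin.succAbove (2 : Fin 4) (2 : Fin 3) = 3 := rfl
  have e0 : ∑ l ∈ Finset.univ.erase (0:Fin 4), (X ((0,l)) : MvPolynomial (Fin 4 × Fin 4) ℚ)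
      = X (0,1) + (X (0,2) + X (0,3)) := by
    rw [show Finset.univ.erase (0:Fin 4) = {1,2,3} from by decide,
      Finset.sum_insert (by decide), Finset.sum_insert (by decide), Finset.sum_singleton]
  have e1 : ∑ l ∈ Finset.univ.erase (1:Fin 4), (X ((1,l)) : MvPolynomial (Fin 4 × Fin 4) ℚ)
      = X (1,0) + (X (1,2) + X (1,3)) := by
    rw [show Finset.univ.erase (1:Fin 4) = {0,2,3} from by decide,
      Finset.sum_insert (by decide), Finset.sum_insert (by decide), Finset.sum_singleton]
  have e3 : ∑ l ∈ Finset.univ.erase (3:Fin 4), (X ((3,l)) : MvPolynomial (Fin 4 × Fin 4) ℚ)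
      = X (3,0) + (X (3,1) + X (3,2)) := by
    rw [show Finset.univ.erase (3:Fin 4) = {0,1,2} from by decide,
      Finset.sum_insert (by decide), Finset.sum_insert (by decide), Finset.sum_singleton]
  simp only [cofVec, Matrix.det_fin_three, Matrix.submatrix_apply, s0, s1, s2, markovA,
    Matrix.sub_apply, Matrix.one_apply, e0, e1, e3, g32, monomial_ff, Fin.sum_univ_succ,
    Fin.sum_univ_zero, Matrix.cons_val_zero, Matrix.cons_val_succ]
  simp (config := { decide := true }) only [Finset.prod_insert, Finset.prod_singleton,
    Finset.mem_insert, Finset.mem_singleton, Prod.mk.injEq, if_true, if_false, not_false_iff,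
    map_neg, map_one]
  ring

noncomputable def g33 : Fin 16 → Finset (Fin 4 × Fin 4) :=
![{(0,1), (1,2), (2,3)},
  {(0,1), (1,3), (2,0)},
  {(0,1), (1,3), (2,1)},
  {(0,1), (1,3), (2,3)},
  {(0,2), (1,0), (2,3)},
  {(0,2), (1,2), (2,3)},
  {(0,2), (1,3), (2,1)},
  {(0,2), (1,3), (2,3)},
  {(0,3), (1,0), (2,0)},
  {(0,3), (1,0), (2,1)},
  {(0,3), (1,0), (2,3)},
  {(0,3), (1,2), (2,0)},
  {(0,3), (1,2), (2,3)},
  {(0,3), (1,3), (2,0)},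
  {(0,3), (1,3), (2,1)},
  {(0,3), (1,3), (2,3)}]

set_option maxHeartbeats 2000000 in
lemma h33 : cofVec 3 3 = ∑ i : Fin 16, monomial (ff (g33 i)) (-1 : ℚ) := by
  have s0 : Fin.succAbove (3 : Fin 4) (0 : Fin 3) = 0 := rfl
  have s1 : Fin.succAbove (3 : Fin 4) (1 : Fin 3) = 1 := rfl
  have s2 : Fin.succAbove (3 : Fin 4) (2 : Fin 3) = 2 := rfl
  have e0 : ∑ l ∈ Finset.univ.erase (0:Fin 4), (X ((0,l)) : MvPolynomial (Fin 4 × Fin 4) ℚ)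
      = X (0,1) + (X (0,2) + X (0,3)) := by
    rw [show Finset.univ.erase (0:Fin 4) = {1,2,3} from by decide,
      Finset.sum_insert (by decide), Finset.sum_insert (by decide), Finset.sum_singleton]
  have e1 : ∑ l ∈ Finset.univ.erase (1:Fin 4), (X ((1,l)) : MvPolynomial (Fin 4 × Fin 4) ℚ)
      = X (1,0) + (X (1,2) + X (1,3)) := by
    rw [show Finset.univ.erase (1:Fin 4) = {0,2,3} from by decide,
      Finset.sum_insert (by decide), Finset.sum_insert (by decide), Finset.sum_singleton]
  have e2 : ∑ l ∈ Finset.univ.erase (2:Fin 4), (X ((2,l)) : MvPolynomial (Fin 4 × Fin 4) ℚ)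
      = X (2,0) + (X (2,1) + X (2,3)) := by
    rw [show Finset.univ.erase (2:Fin 4) = {0,1,3} from by decide,
      Finset.sum_insert (by decide), Finset.sum_insert (by decide), Finset.sum_singleton]
  simp only [cofVec, Matrix.det_fin_three, Matrix.submatrix_apply, s0, s1, s2, markovA,
    Matrix.sub_apply, Matrix.one_apply, e0, e1, e2, g33, monomial_ff, Fin.sum_univ_succ,
    Fin.sum_univ_zero, Matrix.cons_val_zero, Matrix.cons_val_succ]
  simp (config := { decide := true }) only [Finset.prod_insert, Finset.prod_singleton,
    Finset.mem_insert, Finset.mem_singleton, Prod.mk.injEq, if_true, if_false, not_false_iff,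
    map_neg, map_one]
  ring

theorem stmt_18 : ∀ m ∈ ({1, 2, 3} : Set ℕ), ∀ k : Fin (m + 1),
    (cofVec m k).support.card = (m + 1) ^ (m - 1) ∧
    ∀ d ∈ (cofVec m k).support, (cofVec m k).coeff d = 1 ∨ (cofVec m k).coeff d = -1 := by
  intro m hm k
  simp only [Set.mem_insert_iff, Set.mem_singleton_iff] at hm
  rcases hm with rfl | rfl | rfl
  · fin_cases k
    · have H := key g10 (by decide) (-1) (Or.inr rfl) _ h10
      exact ⟨H.1.trans (by norm_num), H.2⟩
    · have H := key g11 (by decide) (-1) (Or.inr rfl) _ h11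
      exact ⟨H.1.trans (by norm_num), H.2⟩
  · fin_cases k
    · have H := key g20 (by decide) (1) (Or.inl rfl) _ h20
      exact ⟨H.1.trans (by norm_num), H.2⟩
    · have H := key g21 (by decide) (1) (Or.inl rfl) _ h21
      exact ⟨H.1.trans (by norm_num), H.2⟩
    · have H := key g22 (by decide) (1) (Or.inl rfl) _ h22
      exact ⟨H.1.trans (by norm_num), H.2⟩
  · fin_cases k
    · have H := key g30 (by decide) (-1) (Or.inr rfl) _ h30
      exact ⟨H.1.trans (by norm_num), H.2⟩
    · have H := key g31 (by decide) (-1) (Or.inr rfl) _ h31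
      exact ⟨H.1.trans (by norm_num), H.2⟩
    · have H := key g32 (by decide) (-1) (Or.inr rfl) _ h32
      exact ⟨H.1.trans (by norm_num), H.2⟩
    · have H := key g33 (by decide) (-1) (Or.inr rfl) _ h33
      exact ⟨H.1.trans (by norm_num), H.2⟩
end

section
/- Let M be a real n×n matrix whose columns each sum to zero. Then for every row index i, Σ_{j=1}^n m_{i,j} · det(M_{j,j}) = 0, where M_{j,j} is M with row j and column j deleted. -/
theorem stmt_19 (n : ℕ) (M : Matrix (Fin (n + 1)) (Fin (n + 1)) ℝ)
    (hcol : ∀ j, ∑ i, M i j = 0) :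
    ∀ i, ∑ j, M i j * (M.submatrix j.succAbove j.succAbove).det = 0 := by
  have hdet : M.det = 0 := by
    by_contra h
    have h1 : Matrix.vecMul (fun _ => (1:ℝ)) M = 0 := by
      ext j
      simpa [Matrix.vecMul, dotProduct] using hcol j
    have := Matrix.eq_zero_of_vecMul_eq_zero h h1
    exact one_ne_zero (congrFun this 0)
  intro i
  have key : ∀ j : Fin (n + 1), (M.submatrix j.succAbove j.succAbove).det = M.adjugate j i := by
    intro j
    rw [Matrix.adjugate_fin_succ_eq_det_submatrix]
    have h0 : ∑ k, (M.submatrix id j.succAbove) k = 0 := by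
      ext b
      simpa [Finset.sum_apply] using (Finset.sum_apply (M := fun _ : Fin n => ℝ) b Finset.univ (fun k => M.submatrix id j.succAbove k)).trans (hcol (j.succAbove b))
    have hrel := Matrix.submatrix_succAbove_det_eq_negOnePow_submatrix_succAbove_det
      (M.submatrix id j.succAbove) h0 i j
    simp only [Matrix.submatrix_submatrix, Function.comp_id, Function.id_comp] at hrel
    rw [hrel]
    have hpar : Int.negOnePow ((i : ℤ) - (j : ℤ)) = Int.negOnePow ((i : ℤ) + (j : ℤ)) := by
      rw [Int.negOnePow_sub, Int.negOnePow_add]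
    rw [hpar]
    have hcast : ((Int.negOnePow ((i : ℤ) + (j : ℤ)) : ℤˣ) : ℤ) = (-1 : ℤ) ^ ((i : ℕ) + (j : ℕ)) := by
      rw [← Nat.cast_add, Int.coe_negOnePow_natCast]
    rw [Units.smul_def, zsmul_eq_mul, hcast]
    push_cast
    ring_nf
    have hsq : ∀ k : ℕ, (((-1 : ℝ)) ^ k) ^ 2 = 1 := fun k => by
      rw [← pow_mul, mul_comm, pow_mul, neg_one_sq, one_pow]
    rw [pow_mul, pow_mul, hsq, hsq, mul_one, mul_one]
  simp_rw [key]
  have := congrFun (congrFun (Matrix.mul_adjugate M) i) i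
  simp only [Matrix.mul_apply, hdet, Matrix.smul_apply, zero_smul, Matrix.zero_apply] at this
  simpa using this
end
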